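/- With the notation of the Chebyshev distance Δ = min{δ | ḇ(δ) ≤ F(b̄(δ))}, the vector F(b̄(Δ)) belongs to C, satisfies ‖b − F(b̄(Δ))‖_∞ = Δ, and is the greatest element of the set C_b = {c ∈ C | ‖b − c‖_∞ = Δ} of Chebyshev approximations of b. -/

import Mathlib

open Set Filter Topology Finset

theorem stmt_12 {n m : ℕ} (T : ℝ → ℝ → ℝ)
    (hmem : ∀ x ∈ Set.Icc (0:ℝ) 1, ∀ y ∈ Set.Icc (0:ℝ) 1, T x y ∈ Set.Icc (0:ℝ) 1)
    (hcomm : ∀ x y, T x y = T y x)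
    (hassoc : ∀ x y z, T x (T y z) = T (T x y) z)
    (hmono : ∀ x y z, y ≤ z → T x y ≤ T x z)
    (hone : ∀ x, T x 1 = x)
    (hcont : ContinuousOn (fun p : ℝ × ℝ => T p.1 p.2) (Set.Icc 0 1 ×ˢ Set.Icc 0 1))
    (I : ℝ → ℝ → ℝ)
    (hI : ∀ a b, I a b = sSup {z : ℝ | z ∈ Set.Icc (0:ℝ) 1 ∧ T a z ≤ b})
    (A : Fin (n+1) → Fin (m+1) → ℝ)
    (hA : ∀ i j, A i j ∈ Set.Icc (0:ℝ) 1)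
    (F : (Fin (n+1) → ℝ) → Fin (n+1) → ℝ)
    (hF : ∀ c i, F c i = Finset.univ.sup' Finset.univ_nonempty (fun j : Fin (m+1) =>
        T (A i j) (Finset.univ.inf' Finset.univ_nonempty (fun k : Fin (n+1) => I (A k j) (c k)))))
    (b : Fin (n+1) → ℝ) (hb : ∀ i, b i ∈ Set.Icc (0:ℝ) 1)
    (C : Set (Fin (n+1) → ℝ))
    (hC : C = {c : Fin (n+1) → ℝ | (∀ i, c i ∈ Set.Icc (0:ℝ) 1) ∧
      ∃ x : Fin (m+1) → ℝ, (∀ j, x j ∈ Set.Icc (0:ℝ) 1) ∧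
        ∀ i, Finset.univ.sup' Finset.univ_nonempty (fun j => T (A i j) (x j)) = c i})
    (Δ : ℝ)
    (hΔ : Δ = sInf {d : ℝ | ∃ c ∈ C,
      d = Finset.univ.sup' Finset.univ_nonempty (fun i => |b i - c i|)})
    :
    IsGreatest {c : Fin (n+1) → ℝ | c ∈ C ∧
        Finset.univ.sup' Finset.univ_nonempty (fun i => |b i - c i|) = Δ}
      (F (fun k => min (b k + Δ) 1)) := by
  classical
  -- Basic facts about T
  have h01 : (0:ℝ) ∈ Set.Icc (0:ℝ) 1 := ⟨le_refl _, zero_le_one⟩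
  have hT0 : ∀ a ∈ Set.Icc (0:ℝ) 1, T a 0 = 0 := by
    intro a ha
    have h1 : T a 0 ≤ 0 := by
      have h := hmono 0 a 1 ha.2
      rw [hone] at h
      calc T a 0 = T 0 a := hcomm a 0
        _ ≤ 0 := h
    exact le_antisymm h1 (hmem a ha 0 h01).1
  -- Continuity of T a ·
  have hTcont : ∀ a ∈ Set.Icc (0:ℝ) 1, ContinuousOn (fun z => T a z) (Set.Icc 0 1) := by
    intro a ha
    have h : ContinuousOn ((fun p : ℝ × ℝ => T p.1 p.2) ∘ (fun z : ℝ => (a, z)))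
        (Set.Icc 0 1) := by
      apply hcont.comp (Continuous.continuousOn (by fun_prop))
      intro z hz
      exact ⟨ha, hz⟩
    exact h
  -- Facts about I
  have hSne : ∀ a ∈ Set.Icc (0:ℝ) 1, ∀ u : ℝ, 0 ≤ u →
      ({z : ℝ | z ∈ Set.Icc (0:ℝ) 1 ∧ T a z ≤ u}).Nonempty := by
    intro a ha u hu
    exact ⟨0, h01, by rw [hT0 a ha]; exact hu⟩
  have hSbdd : ∀ a u : ℝ, BddAbove {z : ℝ | z ∈ Set.Icc (0:ℝ) 1 ∧ T a z ≤ u} :=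
    fun a u => ⟨1, fun z hz => hz.1.2⟩
  have hImem : ∀ a ∈ Set.Icc (0:ℝ) 1, ∀ u : ℝ, 0 ≤ u → I a u ∈ Set.Icc (0:ℝ) 1 := by
    intro a ha u hu
    rw [hI]
    constructor
    · exact le_csSup (hSbdd a u) ⟨h01, by rw [hT0 a ha]; exact hu⟩
    · exact csSup_le (hSne a ha u hu) (fun z hz => hz.1.2)
  have hGal1 : ∀ a ∈ Set.Icc (0:ℝ) 1, ∀ u : ℝ, ∀ z ∈ Set.Icc (0:ℝ) 1,
      T a z ≤ u → z ≤ I a u := by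
    intro a ha u z hz hTz
    rw [hI]
    exact le_csSup (hSbdd a u) ⟨hz, hTz⟩
  have hGal2 : ∀ a ∈ Set.Icc (0:ℝ) 1, ∀ u : ℝ, 0 ≤ u → T a (I a u) ≤ u := by
    intro a ha u hu
    have hclosed : IsClosed {z : ℝ | z ∈ Set.Icc (0:ℝ) 1 ∧ T a z ≤ u} := by
      have h := (hTcont a ha).preimage_isClosed_of_isClosed isClosed_Icc
        (isClosed_Iic (a := u))
      have heq : {z : ℝ | z ∈ Set.Icc (0:ℝ) 1 ∧ T a z ≤ u}
          = Set.Icc 0 1 ∩ (fun z => T a z) ⁻¹' Set.Iic u := by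
        ext z
        simp [Set.mem_setOf_eq]
      rw [heq]
      exact h
    have h := hclosed.csSup_mem (hSne a ha u hu) (hSbdd a u)
    rw [hI]
    exact h.2
  have hImono : ∀ a ∈ Set.Icc (0:ℝ) 1, ∀ u v : ℝ, 0 ≤ u → u ≤ v → I a u ≤ I a v := by
    intro a ha u v hu huv
    rw [hI, hI]
    exact csSup_le_csSup (hSbdd a v) (hSne a ha u hu)
      (fun z hz => ⟨hz.1, hz.2.trans huv⟩)
  -- the greatest-solution operator
  set xh : (Fin (n+1) → ℝ) → Fin (m+1) → ℝ :=
    fun c j => Finset.univ.inf' Finset.univ_nonempty (fun k : Fin (n+1) => I (A k j) (c k))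
    with hxh
  have hFx : ∀ c i, F c i = Finset.univ.sup' Finset.univ_nonempty
      (fun j : Fin (m+1) => T (A i j) (xh c j)) := hF
  have hxh_mem : ∀ c : Fin (n+1) → ℝ, (∀ k, 0 ≤ c k) → ∀ j, xh c j ∈ Set.Icc (0:ℝ) 1 := by
    intro c hc j
    constructor
    · exact Finset.le_inf' _ _ (fun k _ => (hImem (A k j) (hA k j) (c k) (hc k)).1)
    · exact (Finset.inf'_le _ (Finset.mem_univ (0 : Fin (n+1)))).trans
        (hImem (A 0 j) (hA 0 j) (c 0) (hc 0)).2
  have hFle : ∀ c : Fin (n+1) → ℝ, (∀ k, 0 ≤ c k) → ∀ i, F c i ≤ c i := by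
    intro c hc i
    rw [hFx]
    apply Finset.sup'_le
    intro j _
    calc T (A i j) (xh c j) ≤ T (A i j) (I (A i j) (c i)) :=
          hmono _ _ _ (Finset.inf'_le _ (Finset.mem_univ i))
      _ ≤ c i := hGal2 (A i j) (hA i j) (c i) (hc i)
  have hFbox : ∀ c : Fin (n+1) → ℝ, (∀ k, 0 ≤ c k) → ∀ i, F c i ∈ Set.Icc (0:ℝ) 1 := by
    intro c hc i
    rw [hFx]
    constructor
    · exact Finset.le_sup'_of_le _ (Finset.mem_univ (0 : Fin (m+1)))
        (hmem _ (hA i 0) _ (hxh_mem c hc 0)).1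
    · exact Finset.sup'_le _ _ (fun j _ => (hmem _ (hA i j) _ (hxh_mem c hc j)).2)
  have hFC : ∀ c : Fin (n+1) → ℝ, (∀ k, 0 ≤ c k) → F c ∈ C := by
    intro c hc
    rw [hC]
    exact ⟨hFbox c hc, xh c, hxh_mem c hc, fun i => (hFx c i).symm⟩
  have hCbox : ∀ c ∈ C, ∀ k, c k ∈ Set.Icc (0:ℝ) 1 := by
    intro c hc
    rw [hC] at hc
    exact hc.1
  have hFfix : ∀ c ∈ C, F c = c := by
    intro c hc
    have hcbox := hCbox c hc
    rw [hC] at hc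
    obtain ⟨hbox, x, hx, hsol⟩ := hc
    funext i
    apply le_antisymm (hFle c (fun k => (hcbox k).1) i)
    have hxle : ∀ j, x j ≤ xh c j := by
      intro j
      apply Finset.le_inf'
      intro k _
      apply hGal1 (A k j) (hA k j) (c k) (x j) (hx j)
      calc T (A k j) (x j) ≤ Finset.univ.sup' Finset.univ_nonempty
            (fun j' => T (A k j') (x j')) :=
          Finset.le_sup' (fun j' => T (A k j') (x j')) (Finset.mem_univ j)
        _ = c k := hsol k
    calc c i = Finset.univ.sup' Finset.univ_nonempty (fun j => T (A i j) (x j)) :=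
          (hsol i).symm
      _ ≤ Finset.univ.sup' Finset.univ_nonempty (fun j => T (A i j) (xh c j)) :=
          Finset.sup'_mono_fun (fun j _ => hmono _ _ _ (hxle j))
      _ = F c i := (hFx c i).symm
  have hFmono : ∀ c c' : Fin (n+1) → ℝ, (∀ k, 0 ≤ c k) → (∀ k, c k ≤ c' k) →
      ∀ i, F c i ≤ F c' i := by
    intro c c' hc hcc' i
    rw [hFx, hFx]
    apply Finset.sup'_mono_fun
    intro j _
    apply hmono
    apply Finset.le_inf'
    intro k _
    exact (Finset.inf'_le _ (Finset.mem_univ k)).trans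
      (hImono (A k j) (hA k j) (c k) (c' k) (hc k) (hcc' k))
  -- the distance set
  set D : Set ℝ := {d : ℝ | ∃ c ∈ C,
    d = Finset.univ.sup' Finset.univ_nonempty (fun i => |b i - c i|)} with hDdef
  have hbbox : ∀ k, 0 ≤ b k := fun k => (hb k).1
  have hDne : D.Nonempty := ⟨_, F b, hFC b hbbox, rfl⟩
  have hDlb : ∀ d ∈ D, (0:ℝ) ≤ d := by
    rintro d ⟨c, hc, rfl⟩
    exact Finset.le_sup'_of_le _ (Finset.mem_univ (0 : Fin (n+1))) (abs_nonneg _)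
  have hDbdd : BddBelow D := ⟨0, hDlb⟩
  have hΔ0 : 0 ≤ Δ := by
    rw [hΔ]
    exact le_csInf hDne hDlb
  -- the upper shift
  set bb : ℝ → Fin (n+1) → ℝ := fun δ k => min (b k + δ) 1 with hbbdef
  have hbbnn : ∀ δ : ℝ, 0 ≤ δ → ∀ k, 0 ≤ bb δ k := by
    intro δ hδ k
    exact le_min (add_nonneg (hbbox k) hδ) zero_le_one
  have hbbmono : ∀ δ δ' : ℝ, δ ≤ δ' → ∀ k, bb δ k ≤ bb δ' k := by
    intro δ δ' h k
    exact min_le_min (by linarith) (le_refl _)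
  -- Key 1
  have key1 : ∀ δ : ℝ, Δ < δ → ∀ i, b i - δ ≤ F (bb δ) i := by
    intro δ hδ i
    have hδ' : sInf D < δ := by rw [hΔ] at hδ; exact hδ
    obtain ⟨d0, hd0D, hd0lt⟩ := exists_lt_of_csInf_lt hDne hδ'
    obtain ⟨c, hcC, rfl⟩ := hd0D
    have habs : ∀ k, |b k - c k| ≤ Finset.univ.sup' Finset.univ_nonempty
        (fun i => |b i - c i|) :=
      fun k => Finset.le_sup' (fun i => |b i - c i|) (Finset.mem_univ k)
    have hclebb : ∀ k, c k ≤ bb δ k := by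
      intro k
      apply le_min _ (hCbox c hcC k).2
      have h := (abs_le.mp ((habs k).trans hd0lt.le)).1
      linarith
    have hbic : b i - δ ≤ c i := by
      have h := (abs_le.mp ((habs i).trans hd0lt.le)).2
      linarith
    calc b i - δ ≤ c i := hbic
      _ = F c i := by rw [hFfix c hcC]
      _ ≤ F (bb δ) i := hFmono c (bb δ) (fun k => (hCbox c hcC k).1) hclebb i
  -- Key 2
  have key2 : ∀ i, b i - Δ ≤ F (bb Δ) i := by
    intro i
    by_contra hcon
    push_neg at hcon
    set l : Filter ℝ := 𝓝[>] Δ with hl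
    have hφmono : ∀ j : Fin (m+1), ∀ δ1 δ2 : ℝ, Δ ≤ δ1 → δ1 ≤ δ2 →
        xh (bb δ1) j ≤ xh (bb δ2) j := by
      intro j δ1 δ2 h1 h12
      apply Finset.le_inf'
      intro k _
      exact (Finset.inf'_le _ (Finset.mem_univ k)).trans
        (hImono (A k j) (hA k j) _ _ (hbbnn δ1 (hΔ0.trans h1) k) (hbbmono δ1 δ2 h12 k))
    have hφbdd : ∀ j : Fin (m+1), BddBelow ((fun δ => xh (bb δ) j) '' Set.Ioi Δ) := by
      intro j
      refine ⟨0, ?_⟩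
      rintro y ⟨δ, hδ, rfl⟩
      exact (hxh_mem (bb δ) (hbbnn δ (hΔ0.trans (le_of_lt hδ))) j).1
    have hφne : ∀ j : Fin (m+1), ((fun δ => xh (bb δ) j) '' Set.Ioi Δ).Nonempty :=
      fun j => ⟨_, Δ + 1, by simp, rfl⟩
    have hinf : ∀ j : Fin (m+1),
        sInf ((fun δ => xh (bb δ) j) '' Set.Ioi Δ) = xh (bb Δ) j := by
      intro j
      apply le_antisymm
      · set z := sInf ((fun δ => xh (bb δ) j) '' Set.Ioi Δ) with hz
        have hzmem : z ∈ Set.Icc (0:ℝ) 1 := by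
          constructor
          · apply le_csInf (hφne j)
            rintro y ⟨δ, hδ, rfl⟩
            exact (hxh_mem (bb δ) (hbbnn δ (hΔ0.trans hδ.le)) j).1
          · exact (csInf_le (hφbdd j) ⟨Δ + 1, by simp, rfl⟩).trans
              (hxh_mem (bb (Δ+1)) (hbbnn _ (by linarith)) j).2
        have hTz : ∀ k, T (A k j) z ≤ bb Δ k := by
          intro k
          by_contra hTzc
          push_neg at hTzc
          set ε := (T (A k j) z - bb Δ k) / 2 with hε
          have hε0 : 0 < ε := by
            rw [hε]; linarith
          have hzle : z ≤ xh (bb (Δ + ε)) j :=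
            csInf_le (hφbdd j) ⟨Δ + ε, by simp [hε0], rfl⟩
          have h1 : T (A k j) z ≤ bb (Δ + ε) k := by
            calc T (A k j) z ≤ T (A k j) (xh (bb (Δ + ε)) j) := hmono _ _ _ hzle
              _ ≤ T (A k j) (I (A k j) (bb (Δ + ε) k)) :=
                  hmono _ _ _ (Finset.inf'_le _ (Finset.mem_univ k))
              _ ≤ bb (Δ + ε) k := hGal2 _ (hA k j) _ (hbbnn _ (by linarith) k)
          have h2 : bb (Δ + ε) k ≤ bb Δ k + ε := by
            show min (b k + (Δ + ε)) 1 ≤ min (b k + Δ) 1 + ε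
            rw [← min_add_add_right]
            exact min_le_min (by linarith) (by linarith)
          have h3 : bb Δ k + ε < T (A k j) z := by
            rw [hε]; linarith
          linarith
        apply Finset.le_inf'
        intro k _
        exact hGal1 (A k j) (hA k j) (bb Δ k) z hzmem (hTz k)
      · apply le_csInf (hφne j)
        rintro y ⟨δ, hδ, rfl⟩
        exact hφmono j Δ δ (le_refl _) hδ.le
    have hψ : ∀ j : Fin (m+1), Filter.Tendsto (fun δ => T (A i j) (xh (bb δ) j)) l
        (𝓝 (T (A i j) (xh (bb Δ) j))) := by
      intro j
      have hmOn : MonotoneOn (fun δ => xh (bb δ) j) (Set.Ioi Δ) :=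
        fun δ1 h1 δ2 _ h12 => hφmono j δ1 δ2 (le_of_lt h1) h12
      have htend : Filter.Tendsto (fun δ => xh (bb δ) j) l (𝓝 (xh (bb Δ) j)) := by
        have h := hmOn.tendsto_nhdsGT (hφbdd j)
        rwa [hinf j] at h
      have hev : ∀ᶠ δ in l, xh (bb δ) j ∈ Set.Icc (0:ℝ) 1 :=
        eventually_nhdsWithin_of_forall
          (fun δ hδ => hxh_mem (bb δ) (hbbnn δ (hΔ0.trans (le_of_lt hδ))) j)
      have htend' : Filter.Tendsto (fun δ => xh (bb δ) j)
          l (𝓝[Set.Icc (0:ℝ) 1] (xh (bb Δ) j)) :=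
        tendsto_nhdsWithin_iff.mpr ⟨htend, hev⟩
      exact (((hTcont (A i j) (hA i j)).continuousWithinAt
        (hxh_mem (bb Δ) (hbbnn Δ hΔ0) j)).tendsto).comp htend'
    have hψΔ : ∀ j : Fin (m+1), T (A i j) (xh (bb Δ) j) < b i - Δ := by
      intro j
      calc T (A i j) (xh (bb Δ) j) ≤ F (bb Δ) i := by
            rw [hFx]
            exact Finset.le_sup' (fun j => T (A i j) (xh (bb Δ) j)) (Finset.mem_univ j)
        _ < b i - Δ := hcon
    have hev2 : ∀ᶠ δ in l, ∀ j : Fin (m+1), T (A i j) (xh (bb δ) j) < b i - δ := by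
      rw [Filter.eventually_all]
      intro j
      have hid : Filter.Tendsto (fun δ : ℝ => δ) l (𝓝 Δ) :=
        tendsto_id.mono_left nhdsWithin_le_nhds
      have h := ((hψ j).add hid).eventually_lt_const
        (show T (A i j) (xh (bb Δ) j) + Δ < b i by linarith [hψΔ j])
      exact h.mono (fun δ hδ => by linarith)
    have hne : l.NeBot := by rw [hl]; infer_instance
    obtain ⟨δ, hall, hδgt⟩ :=
      (hev2.and (eventually_nhdsWithin_of_forall (fun δ (hδ : δ ∈ Set.Ioi Δ) => hδ))).exists
    have h1 := key1 δ hδgt i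
    have h2 : F (bb δ) i < b i - δ := by
      rw [hFx]
      exact (Finset.sup'_lt_iff Finset.univ_nonempty).mpr (fun j _ => hall j)
    linarith
  -- assemble
  have hbbΔ : (fun k => min (b k + Δ) 1) = bb Δ := rfl
  rw [hbbΔ]
  have hbbΔnn : ∀ k, 0 ≤ bb Δ k := hbbnn Δ hΔ0
  have hdle : Finset.univ.sup' Finset.univ_nonempty (fun i => |b i - F (bb Δ) i|) ≤ Δ := by
    apply Finset.sup'_le
    intro i _
    rw [abs_le]
    constructor
    · have h1 := hFle (bb Δ) hbbΔnn i
      have h2 : bb Δ i ≤ b i + Δ := min_le_left _ _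
      linarith
    · have h := key2 i
      linarith
  have hdge : Δ ≤ Finset.univ.sup' Finset.univ_nonempty (fun i => |b i - F (bb Δ) i|) := by
    have h : sInf D ≤ Finset.univ.sup' Finset.univ_nonempty (fun i => |b i - F (bb Δ) i|) :=
      csInf_le hDbdd ⟨F (bb Δ), hFC (bb Δ) hbbΔnn, rfl⟩
    rw [← hΔ] at h
    exact h
  constructor
  · exact ⟨hFC (bb Δ) hbbΔnn, le_antisymm hdle hdge⟩
  · rintro c ⟨hcC, hdc⟩
    intro k
    have hcle : ∀ k, c k ≤ bb Δ k := by
      intro k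
      apply le_min _ (hCbox c hcC k).2
      have h := Finset.le_sup' (fun i => |b i - c i|) (Finset.mem_univ k)
      rw [hdc] at h
      have h2 := (abs_le.mp h).1
      linarith
    calc c k = F c k := by rw [hFfix c hcC]
      _ ≤ F (bb Δ) k := hFmono c (bb Δ) (fun k' => (hCbox c hcC k').1) hcle k
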